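/- Let A be a compact subset of ℝⁿ, and for i = 1,…,N let J_i : ℝⁿ → ℝ and σ_i : ℝⁿ → ℝ be continuous functions with J_i(y) ≥ 0 and σ_i(y) ≥ 0 for all y, and σ_i(y) > 0 whenever J_i(y) > 0. Fix an index i₀ ∈ {1,…,N} and a real c ≥ 0, and let S = { y ∈ A : J_{i₀}(y) ≤ c } be the corresponding sublevel set. Suppose x : [0,∞) → ℝⁿ is continuous with x(t) ∈ A for all t ≥ 0, x(0) ∈ S, and for each i the function t ↦ J_i(x(t)) is differentiable on [0,∞) with derivative at most −σ_i(x(t)) at every t ≥ 0. Then x(t) ∈ S for all t ≥ 0, and there exist a point p ∈ S and a sequence of times t_k → ∞ with x(t_k) → p and J_i(p) = 0 for every i = 1,…,N. In particular, if S contains no point where all of J_1,…,J_N vanish, then no such trajectory starting in S exists. -/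

import Mathlib

open scoped RealInnerProductSpace

/-- A function on `[0,∞)` with nonpositive one-sided derivative is antitone there. -/
lemma antitoneOn_Ici_of_deriv_nonpos {f f' : ℝ → ℝ}
    (hf : ∀ t, 0 ≤ t → HasDerivWithinAt f (f' t) (Set.Ici 0) t)
    (h0 : ∀ t, 0 ≤ t → f' t ≤ 0) : AntitoneOn f (Set.Ici 0) := by
  apply antitoneOn_of_hasDerivWithinAt_nonpos (f' := f') (convex_Ici 0)
  · exact fun t ht => (hf t ht).continuousWithinAt
  · intro t ht
    rw [interior_Ici] at ht ⊢
    exact (hf t (le_of_lt ht)).mono Set.Ioi_subset_Ici_self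
  · intro t ht
    rw [interior_Ici] at ht
    exact h0 t (le_of_lt ht)

/-- Trajectory-level content of Proposition 2: a trajectory staying in a compact set `A`,
starting in the sublevel set `S = {y ∈ A | J i₀ y ≤ c}`, and decreasing every
nonnegative value function `J i` at rate at least `σ i` (with `σ i > 0` wherever
`J i > 0`) never leaves `S` and approaches a common zero of all the `J i` inside `S`. -/
theorem prop2_trajectory {n N : ℕ}
    (A : Set (EuclideanSpace ℝ (Fin n))) (hA : IsCompact A)
    (J σ : Fin N → EuclideanSpace ℝ (Fin n) → ℝ)
    (hJcont : ∀ i, Continuous (J i)) (hσcont : ∀ i, Continuous (σ i))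
    (hJnonneg : ∀ i y, 0 ≤ J i y) (hσnonneg : ∀ i y, 0 ≤ σ i y)
    (hσpos : ∀ i y, 0 < J i y → 0 < σ i y)
    (i₀ : Fin N) (c : ℝ) (hc : 0 ≤ c)
    (S : Set (EuclideanSpace ℝ (Fin n)))
    (hS : S = {y ∈ A | J i₀ y ≤ c})
    (x : ℝ → EuclideanSpace ℝ (Fin n)) (hxcont : ContinuousOn x (Set.Ici 0))
    (hxA : ∀ t, 0 ≤ t → x t ∈ A)
    (hx0 : x 0 ∈ S)
    (D : Fin N → ℝ → ℝ)
    (hderiv : ∀ i t, 0 ≤ t →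
      HasDerivWithinAt (fun s => J i (x s)) (D i t) (Set.Ici 0) t)
    (hdecr : ∀ i t, 0 ≤ t → D i t ≤ -σ i (x t)) :
    (∀ t, 0 ≤ t → x t ∈ S) ∧
    ∃ p ∈ S, ∃ tk : ℕ → ℝ,
      Filter.Tendsto tk Filter.atTop Filter.atTop ∧
      Filter.Tendsto (fun k => x (tk k)) Filter.atTop (nhds p) ∧
      ∀ i, J i p = 0 := by
  -- each J i ∘ x is antitone on [0,∞)
  have hanti : ∀ i, AntitoneOn (fun s => J i (x s)) (Set.Ici 0) := by
    intro i
    refine antitoneOn_Ici_of_deriv_nonpos (hderiv i) fun t ht => ?_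
    exact (hdecr i t ht).trans (neg_nonpos.2 (hσnonneg i (x t)))
  -- first conclusion
  have hinS : ∀ t, 0 ≤ t → x t ∈ S := by
    intro t ht
    rw [hS]
    refine ⟨hxA t ht, le_trans ?_ ((hS ▸ hx0).2)⟩
    exact hanti i₀ Set.self_mem_Ici ht ht
  refine ⟨hinS, ?_⟩
  -- extract a convergent subsequence of x(k), k ∈ ℕ
  obtain ⟨p, hpA, φ, hφmono, hφtend⟩ :=
    hA.tendsto_subseq (x := fun k : ℕ => x (k : ℝ)) (fun k => hxA _ (Nat.cast_nonneg k))
  have htk : Filter.Tendsto (fun k : ℕ => ((φ k : ℕ) : ℝ)) Filter.atTop Filter.atTop :=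
    tendsto_natCast_atTop_atTop.comp hφmono.tendsto_atTop
  -- J i (x t) ≥ J i p for all t ≥ 0
  have hlb : ∀ i t, 0 ≤ t → J i p ≤ J i (x t) := by
    intro i t ht
    have h1 : Filter.Tendsto (fun k => J i (x (φ k : ℕ))) Filter.atTop (nhds (J i p)) :=
      ((hJcont i).tendsto p).comp hφtend
    refine le_of_tendsto h1 ?_
    have h2 : ∀ᶠ k in Filter.atTop, t ≤ ((φ k : ℕ) : ℝ) := htk.eventually_ge_atTop t
    filter_upwards [h2] with k hk
    exact hanti i ht (ht.trans hk) hk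
  -- every J i p = 0
  have hJp : ∀ i, J i p = 0 := by
    intro i
    by_contra h
    have hpos : 0 < J i p := lt_of_le_of_ne (hJnonneg i p) (Ne.symm h)
    -- compact set where J i ≥ J i p
    set K := A ∩ {y | J i p ≤ J i y} with hK
    have hKcomp : IsCompact K :=
      hA.inter_right (isClosed_le continuous_const (hJcont i))
    have hKne : K.Nonempty := ⟨p, hpA, Set.mem_setOf_eq ▸ le_refl _⟩
    obtain ⟨y₀, hy₀K, hy₀min⟩ := hKcomp.exists_isMinOn hKne (hσcont i).continuousOn
    set ε := σ i y₀ with hε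
    have hεpos : 0 < ε := hσpos i y₀ (lt_of_lt_of_le hpos hy₀K.2)
    -- the function J i (x t) + ε t is antitone on [0,∞)
    have hg : AntitoneOn (fun s => J i (x s) + ε * s) (Set.Ici 0) := by
      refine antitoneOn_Ici_of_deriv_nonpos (f' := fun t => D i t + ε) ?_ ?_
      · intro t ht
        exact (hderiv i t ht).add (((hasDerivAt_id t).const_mul ε).hasDerivWithinAt.congr_deriv
          (by ring))
      · intro t ht
        have hxK : x t ∈ K := ⟨hxA t ht, hlb i t ht⟩
        have : ε ≤ σ i (x t) := hy₀min hxK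
        show D i t + ε ≤ 0
        linarith [hdecr i t ht]
    -- contradiction for large t
    set T := (J i (x 0) + 1) / ε with hT
    have hT0 : 0 ≤ T := div_nonneg (by linarith [hJnonneg i (x 0)]) hεpos.le
    have := hg Set.self_mem_Ici (Set.mem_Ici.2 hT0) hT0
    simp only [mul_zero, add_zero] at this
    have hεT : ε * T = J i (x 0) + 1 := by
      rw [hT]; field_simp [hεpos.ne']
    nlinarith [hJnonneg i (x T)]
  refine ⟨p, ?_, fun k => ((φ k : ℕ) : ℝ), htk, hφtend, hJp⟩
  rw [hS]
  exact ⟨hpA, by rw [hJp i₀]; exact hc⟩
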